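/- arXiv:2605.24898 — 3 statements merged into one kernel-verified Lean document; each statement's English description precedes it below -/
import Mathlib

section
/- Let n ≥ 1 and let ρ_1, …, ρ_n > 0, c_{v,1}, …, c_{v,n} > 0, r_1, …, r_n > 0 and T > 0 be real numbers. Set ρ = Σ_{i=1}^n ρ_i, c̄_v = (Σ_{i=1}^n ρ_i c_{v,i}) / ρ, and define the specific mixture entropy s = (1/ρ) Σ_{i=1}^n ρ_i (c_{v,i} ln T − r_i ln ρ_i). If s ≥ Z* for some Z* ∈ ℝ, then T ≥ exp( (Z* + (1/ρ) Σ_{i=1}^n ρ_i r_i ln ρ_i) / c̄_v ) > 0, and consequently the pressure p = Σ_{i=1}^n ρ_i r_i T is strictly positive. -/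
open Real Finset

/-- Entropy lower bound implies temperature (and hence pressure) lower bound for an
ideal multicomponent gas: if the specific mixture entropy
`s = (1/ρ) Σ ρᵢ (c_{v,i} ln T − rᵢ ln ρᵢ)` satisfies `s ≥ Z*`, then
`T ≥ exp((Z* + (1/ρ) Σ ρᵢ rᵢ ln ρᵢ)/c̄_v) > 0` and the pressure `p = Σ ρᵢ rᵢ T` is
strictly positive. -/
theorem stmt_1 {n : ℕ} (hn : 1 ≤ n)
    (ρ cv r : Fin n → ℝ) (T Zstar : ℝ)
    (hρ : ∀ i, 0 < ρ i) (hcv : ∀ i, 0 < cv i) (hr : ∀ i, 0 < r i) (hT : 0 < T)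
    (ρtot cvbar s : ℝ)
    (hρtot : ρtot = ∑ i, ρ i)
    (hcvbar : cvbar = (∑ i, ρ i * cv i) / ρtot)
    (hs : s = (1 / ρtot) * ∑ i, ρ i * (cv i * Real.log T - r i * Real.log (ρ i)))
    (hZ : Zstar ≤ s) :
    Real.exp ((Zstar + (1 / ρtot) * ∑ i, ρ i * r i * Real.log (ρ i)) / cvbar) ≤ T ∧
    0 < Real.exp ((Zstar + (1 / ρtot) * ∑ i, ρ i * r i * Real.log (ρ i)) / cvbar) ∧
    0 < ∑ i, ρ i * r i * T := by
  have hne : (Finset.univ : Finset (Fin n)).Nonempty := by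
    simpa using Finset.univ_nonempty_iff.mpr (Fin.pos_iff_nonempty.mp hn)
  have hρtot_pos : 0 < ρtot := by
    rw [hρtot]; exact Finset.sum_pos (fun i _ => hρ i) hne
  have hcvnum : 0 < ∑ i, ρ i * cv i :=
    Finset.sum_pos (fun i _ => mul_pos (hρ i) (hcv i)) hne
  have hcvbar_pos : 0 < cvbar := hcvbar ▸ div_pos hcvnum hρtot_pos
  -- rewrite s
  have hs' : s = cvbar * Real.log T - (1 / ρtot) * ∑ i, ρ i * r i * Real.log (ρ i) := by
    rw [hs, hcvbar]
    have : ∑ i, ρ i * (cv i * Real.log T - r i * Real.log (ρ i))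
        = (∑ i, ρ i * cv i) * Real.log T - ∑ i, ρ i * r i * Real.log (ρ i) := by
      rw [Finset.sum_mul, ← Finset.sum_sub_distrib]
      apply Finset.sum_congr rfl; intro i _; ring
    rw [this]
    field_simp
  have key : (Zstar + (1 / ρtot) * ∑ i, ρ i * r i * Real.log (ρ i)) / cvbar ≤ Real.log T := by
    rw [div_le_iff₀ hcvbar_pos]
    have := hZ.trans_eq hs'
    linarith
  refine ⟨?_, Real.exp_pos _, ?_⟩
  · calc Real.exp ((Zstar + (1 / ρtot) * ∑ i, ρ i * r i * Real.log (ρ i)) / cvbar)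
        ≤ Real.exp (Real.log T) := Real.exp_le_exp.mpr key
      _ = T := Real.exp_log hT
  · exact Finset.sum_pos (fun i _ => mul_pos (mul_pos (hρ i) (hr i)) hT) hne
end

section
/- Let n ≥ 1, let c_{v,1}, …, c_{v,n} > 0 and r_1, …, r_n > 0 be fixed constants, set c_{p,i} = c_{v,i} + r_i, γ_i = c_{p,i}/c_{v,i} and γ_min = min_i γ_i, and let Z* ∈ ℝ. Then there exists a constant C > 0, depending only on n, (c_{v,i}), (r_i) and Z*, such that for all partial densities ρ_1, …, ρ_n > 0 and all temperatures T > 0 satisfying the entropy lower bound s := (1/ρ) Σ_{i=1}^n ρ_i (c_{v,i} ln T − r_i ln ρ_i) ≥ Z*, where ρ = Σ_{i=1}^n ρ_i, the total density and the pressure p = Σ_{i=1}^n ρ_i r_i T satisfy ρ^{γ_min} ≤ 1 + C p. -/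
open Real Finset

set_option maxHeartbeats 1000000

/-- `y·log y ≥ −1/e` for `y > 0`. -/
lemma aux_mul_log_ge (y : ℝ) (hy : 0 < y) : -(1 / Real.exp 1) ≤ y * Real.log y := by
  have hpos : 0 < 1 / (y * Real.exp 1) := by positivity
  have h := Real.log_le_sub_one_of_pos hpos
  have hlog : Real.log (1 / (y * Real.exp 1)) = -Real.log y - 1 := by
    rw [one_div, Real.log_inv, Real.log_mul (ne_of_gt hy) (ne_of_gt (Real.exp_pos 1)),
      Real.log_exp]
    ring
  rw [hlog] at h
  have h2 : -Real.log y ≤ 1 / (y * Real.exp 1) := by linarith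
  have h3 : y * (-Real.log y) ≤ y * (1 / (y * Real.exp 1)) :=
    mul_le_mul_of_nonneg_left h2 hy.le
  have h4 : y * (1 / (y * Real.exp 1)) = 1 / Real.exp 1 := by
    field_simp
  nlinarith [h3, h4]

/-- Pointwise density–pressure estimate: with `γᵢ = c_{p,i}/c_{v,i} = (c_{v,i}+rᵢ)/c_{v,i}`
and `γ_min = min_i γᵢ`, there is a constant `C > 0`, depending only on `n`, `(c_{v,i})`,
`(rᵢ)` and `Z*`, such that whenever the specific mixture entropy satisfies `s ≥ Z*`, the
total density `ρ = Σ ρᵢ` and pressure `p = Σ ρᵢ rᵢ T` satisfy `ρ^{γ_min} ≤ 1 + C p`. -/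
theorem stmt_3 {n : ℕ} (hn : 1 ≤ n)
    (cv r : Fin n → ℝ) (hcv : ∀ i, 0 < cv i) (hr : ∀ i, 0 < r i)
    (γmin : ℝ)
    (hγmin : IsLeast {x : ℝ | ∃ i : Fin n, x = (cv i + r i) / cv i} γmin)
    (Zstar : ℝ) :
    ∃ C : ℝ, 0 < C ∧ ∀ (ρ : Fin n → ℝ) (T : ℝ),
      (∀ i, 0 < ρ i) → 0 < T →
      Zstar ≤ (1 / ∑ i, ρ i) * ∑ i, ρ i * (cv i * Real.log T - r i * Real.log (ρ i)) →
      (∑ i, ρ i) ^ γmin ≤ 1 + C * ∑ i, ρ i * r i * T := by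
  have hne : (Finset.univ : Finset (Fin n)).Nonempty := by
    have : Nonempty (Fin n) := Fin.pos_iff_nonempty.mp (by omega)
    exact Finset.univ_nonempty
  obtain ⟨⟨i0, hi0⟩, hlb⟩ := hγmin
  -- γmin > 1
  have hγ1 : 1 < γmin := by
    rw [hi0]
    rw [lt_div_iff₀ (hcv i0)]
    have := hr i0; linarith
  -- termwise: (γmin - 1) * cv i ≤ r i
  have hterm : ∀ i : Fin n, (γmin - 1) * cv i ≤ r i := by
    intro i
    have h := hlb ⟨i, rfl⟩
    rw [le_div_iff₀ (hcv i)] at h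
    linarith
  set cmin := Finset.univ.inf' hne cv with hcmin_def
  set rmin := Finset.univ.inf' hne r with hrmin_def
  have hcmin : 0 < cmin := by
    rw [hcmin_def, Finset.lt_inf'_iff]
    intro i _; exact hcv i
  have hrmin : 0 < rmin := by
    rw [hrmin_def, Finset.lt_inf'_iff]
    intro i _; exact hr i
  have hcmin_le : ∀ i : Fin n, cmin ≤ cv i := fun i =>
    Finset.inf'_le _ (Finset.mem_univ i)
  have hrmin_le : ∀ i : Fin n, rmin ≤ r i := fun i =>
    Finset.inf'_le _ (Finset.mem_univ i)
  set K : ℝ := (∑ i, r i) / Real.exp 1 with hK_def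
  set M : ℝ := |Zstar - K| / cmin with hM_def
  have hM0 : 0 ≤ M := by positivity
  refine ⟨Real.exp M / rmin, by positivity, ?_⟩
  intro ρ T hρ hT hs
  set S : ℝ := ∑ i, ρ i with hS_def
  have hSpos : 0 < S := Finset.sum_pos (fun i _ => hρ i) hne
  have hppos : 0 < ∑ i, ρ i * r i * T :=
    Finset.sum_pos (fun i _ => by have := hρ i; have := hr i; positivity) hne
  rcases le_or_gt S 1 with hS1 | hS1
  · -- small density case
    have h1 : S ^ γmin ≤ 1 := Real.rpow_le_one hSpos.le hS1 (by linarith)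
    have h2 : 0 ≤ Real.exp M / rmin * ∑ i, ρ i * r i * T := by positivity
    linarith
  · -- main case : S > 1
    have hlogS : 0 ≤ Real.log S := Real.log_nonneg hS1.le
    -- entropy multiplied by S
    have hs' : Zstar * S ≤ ∑ i, ρ i * (cv i * Real.log T - r i * Real.log (ρ i)) := by
      have := mul_le_mul_of_nonneg_right hs hSpos.le
      calc Zstar * S ≤ (1 / S) * (∑ i, ρ i * (cv i * Real.log T - r i * Real.log (ρ i))) * S := by
            linarith [this]
        _ = ∑ i, ρ i * (cv i * Real.log T - r i * Real.log (ρ i)) := by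
            rw [one_div, mul_comm, ← mul_assoc, mul_inv_cancel₀ hSpos.ne', one_mul]
    -- split the sum
    have hsplit : ∑ i, ρ i * (cv i * Real.log T - r i * Real.log (ρ i))
        = (∑ i, ρ i * cv i) * Real.log T - ∑ i, ρ i * r i * Real.log (ρ i) := by
      rw [Finset.sum_mul, ← Finset.sum_sub_distrib]
      congr 1; ext i; ring
    -- log ρ i = log (ρ i / S) + log S
    have hlogρ : ∀ i : Fin n, Real.log (ρ i) = Real.log (ρ i / S) + Real.log S := by
      intro i
      rw [Real.log_div (ne_of_gt (hρ i)) (ne_of_gt hSpos)]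
      ring
    have hBsum : ∑ i, ρ i * r i * Real.log (ρ i)
        = (∑ i, ρ i * r i * Real.log (ρ i / S)) + (∑ i, ρ i * r i) * Real.log S := by
      rw [Finset.sum_mul, ← Finset.sum_add_distrib]
      congr 1; ext i; rw [hlogρ i]; ring
    -- lower bound on the mixing entropy term
    have hmix : -(S * K) ≤ ∑ i, ρ i * r i * Real.log (ρ i / S) := by
      have : ∀ i ∈ Finset.univ, S * (r i * -(1 / Real.exp 1)) ≤ ρ i * r i * Real.log (ρ i / S) := by
        intro i _
        have hY : 0 < ρ i / S := div_pos (hρ i) hSpos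
        have h := aux_mul_log_ge (ρ i / S) hY
        have h2 : r i * -(1 / Real.exp 1) ≤ r i * ((ρ i / S) * Real.log (ρ i / S)) :=
          mul_le_mul_of_nonneg_left h (hr i).le
        have h3 : S * (r i * -(1 / Real.exp 1)) ≤ S * (r i * ((ρ i / S) * Real.log (ρ i / S))) :=
          mul_le_mul_of_nonneg_left h2 hSpos.le
        have h4 : S * (r i * ((ρ i / S) * Real.log (ρ i / S))) = ρ i * r i * Real.log (ρ i / S) := by
          field_simp
        linarith
      have hsum := Finset.sum_le_sum this
      have heq : ∑ i, S * (r i * -(1 / Real.exp 1)) = -(S * K) := by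
        rw [← Finset.mul_sum]
        have h5 : ∑ i, r i * -(1 / Real.exp 1) = -((∑ i, r i) / Real.exp 1) := by
          rw [← Finset.sum_mul]; field_simp
        rw [h5, hK_def]; ring
      linarith
    set B : ℝ := ∑ i, ρ i * cv i with hB_def
    have hBpos : 0 < B := Finset.sum_pos (fun i _ => by have := hρ i; have := hcv i; positivity) hne
    have hBge : cmin * S ≤ B := by
      rw [hB_def, hS_def, Finset.mul_sum]
      exact Finset.sum_le_sum fun i _ => by
        have := hcmin_le i; have := hρ i; nlinarith
    -- ∑ ρ r ≥ (γmin - 1) B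
    have hRB : (γmin - 1) * B ≤ ∑ i, ρ i * r i := by
      rw [hB_def, Finset.mul_sum]
      exact Finset.sum_le_sum fun i _ => by
        have := hterm i; have := hρ i; nlinarith
    -- main entropy consequence
    have hmain : (Zstar - K) * S + (∑ i, ρ i * r i) * Real.log S ≤ B * Real.log T := by
      rw [hsplit] at hs'
      have := hBsum
      nlinarith [hmix, hs']
    -- bound on constant term
    have hZ : -(M * B) ≤ (Zstar - K) * S := by
      have h1 : -|Zstar - K| * S ≤ (Zstar - K) * S :=
        mul_le_mul_of_nonneg_right (neg_abs_le _) hSpos.le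
      have h2 : |Zstar - K| * (cmin * S) ≤ |Zstar - K| * B :=
        mul_le_mul_of_nonneg_left hBge (abs_nonneg _)
      have h3 : M * (cmin * S) = |Zstar - K| * S := by
        rw [hM_def]; field_simp
      have h4 : M * (cmin * S) ≤ M * B := mul_le_mul_of_nonneg_left hBge hM0
      linarith
    have hRlog : (γmin - 1) * B * Real.log S ≤ (∑ i, ρ i * r i) * Real.log S :=
      mul_le_mul_of_nonneg_right hRB hlogS
    have hlogT : -M + (γmin - 1) * Real.log S ≤ Real.log T := by
      have hB' : (-M + (γmin - 1) * Real.log S) * B ≤ B * Real.log T := by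
        have e : (-M + (γmin - 1) * Real.log S) * B
            = -(M * B) + (γmin - 1) * B * Real.log S := by ring
        rw [e]; linarith
      have := (mul_le_mul_iff_of_pos_right hBpos).mp (by linarith [hB'] : (-M + (γmin - 1) * Real.log S) * B ≤ Real.log T * B)
      exact this
    -- exponentiate
    have hTlb : Real.exp (-M) * S ^ (γmin - 1) ≤ T := by
      have h := Real.exp_le_exp.mpr hlogT
      rw [Real.exp_log hT, Real.exp_add] at h
      have hrw : S ^ (γmin - 1) = Real.exp ((γmin - 1) * Real.log S) := by
        rw [Real.rpow_def_of_pos hSpos, mul_comm]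
      rw [hrw]; exact h
    -- conclude
    have hSγ : S ^ γmin = S * S ^ (γmin - 1) := by
      have h : S ^ γmin = S ^ (1 + (γmin - 1)) := by norm_num
      rw [h, Real.rpow_add hSpos, Real.rpow_one]
    have hplarge : rmin * S * T ≤ ∑ i, ρ i * r i * T := by
      have h1 : rmin * S ≤ ∑ i, ρ i * r i := by
        rw [hS_def, Finset.mul_sum]
        exact Finset.sum_le_sum fun i _ => by
          have := hrmin_le i; have := hρ i; nlinarith
      calc rmin * S * T ≤ (∑ i, ρ i * r i) * T := mul_le_mul_of_nonneg_right h1 hT.le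
        _ = ∑ i, ρ i * r i * T := by rw [Finset.sum_mul]
    have hfinal : S ^ γmin ≤ Real.exp M / rmin * ∑ i, ρ i * r i * T := by
      have hST : S * (Real.exp (-M) * S ^ (γmin - 1)) ≤ S * T :=
        mul_le_mul_of_nonneg_left hTlb hSpos.le
      have hrpow : 0 < S ^ (γmin - 1) := Real.rpow_pos_of_pos hSpos _
      have hexp : Real.exp (-M) = (Real.exp M)⁻¹ := by
        rw [Real.exp_neg]
      have key : S ^ γmin ≤ Real.exp M * (S * T) := by
        rw [hSγ]
        have h6 := mul_le_mul_of_nonneg_left hST (Real.exp_pos M).le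
        have h7 : Real.exp M * Real.exp (-M) = 1 := by
          rw [← Real.exp_add]; simp
        have h8 : Real.exp M * (S * (Real.exp (-M) * S ^ (γmin - 1)))
            = (Real.exp M * Real.exp (-M)) * (S * S ^ (γmin - 1)) := by ring
        rw [h8, h7, one_mul] at h6
        linarith
      calc S ^ γmin ≤ Real.exp M * (S * T) := key
        _ = Real.exp M / rmin * (rmin * S * T) := by field_simp
        _ ≤ Real.exp M / rmin * ∑ i, ρ i * r i * T := by
            apply mul_le_mul_of_nonneg_left hplarge (by positivity)
    linarith
end

section
/- Let I be a finite nonempty index set, T > 0, and let ρ : [0,T] → (I → ℝ) be such that each component ρ_K is continuously differentiable. Let C : [0,T] → ℝ be nonnegative and integrable on [0,T]. Assume that for every t ∈ [0,T] and every index K* ∈ I achieving the minimum min_{J ∈ I} ρ_J(t), one has (d/dt) ρ_{K*}(t) ≥ − C(t) ρ_{K*}(t). If ρ_K(0) > 0 for all K ∈ I, then for all t ∈ [0,T] and all K ∈ I, ρ_K(t) ≥ (min_{J ∈ I} ρ_J(0)) · exp( − ∫_0^t C(τ) dτ ) > 0. -/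
open Finset Set Filter MeasureTheory Topology

/-- Minimum principle and Grönwall argument for positivity of discrete densities:
if each component `ρ_K` is `C¹` on `[0,T]`, `C ≥ 0` is integrable, and at any time any
component achieving the minimum satisfies `ρ_{K*}'(t) ≥ −C(t) ρ_{K*}(t)`, then strictly
positive initial data stay bounded below by `(min_J ρ_J(0)) · exp(−∫_0^t C)` > 0. -/
theorem stmt_9 {ι : Type*} [Fintype ι] [Nonempty ι]
    (T : ℝ) (hT : 0 < T)
    (ρ ρ' : ℝ → ι → ℝ) (C : ℝ → ℝ)
    (hderiv : ∀ K, ∀ t ∈ Set.Icc (0 : ℝ) T,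
      HasDerivWithinAt (fun τ => ρ τ K) (ρ' t K) (Set.Icc (0 : ℝ) T) t)
    (hcont : ∀ K, ContinuousOn (fun t => ρ' t K) (Set.Icc (0 : ℝ) T))
    (hCpos : ∀ t ∈ Set.Icc (0 : ℝ) T, 0 ≤ C t)
    (hCint : MeasureTheory.IntegrableOn C (Set.Icc (0 : ℝ) T))
    (hmin : ∀ t ∈ Set.Icc (0 : ℝ) T, ∀ Kstar : ι,
      (∀ J, ρ t Kstar ≤ ρ t J) → -C t * ρ t Kstar ≤ ρ' t Kstar)
    (h0 : ∀ K, 0 < ρ 0 K) :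
    ∀ t ∈ Set.Icc (0 : ℝ) T, ∀ K,
      (Finset.univ.inf' Finset.univ_nonempty (ρ 0)) *
          Real.exp (-(∫ τ in (0 : ℝ)..t, C τ)) ≤ ρ t K ∧
      0 < (Finset.univ.inf' Finset.univ_nonempty (ρ 0)) *
          Real.exp (-(∫ τ in (0 : ℝ)..t, C τ)) := by
  classical
  set m : ℝ → ℝ := fun t => Finset.univ.inf' Finset.univ_nonempty (ρ t) with hmdef
  have hρcont : ∀ K, ContinuousOn (fun t => ρ t K) (Set.Icc (0:ℝ) T) :=
    fun K t ht => (hderiv K t ht).continuousWithinAt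
  have hmcont : ContinuousOn m (Set.Icc (0:ℝ) T) := by
    intro t ht
    exact ContinuousWithinAt.finset_inf'_apply Finset.univ_nonempty
      (fun K _ => hρcont K t ht)
  have hm_le : ∀ t K, m t ≤ ρ t K := fun t K => Finset.inf'_le _ (Finset.mem_univ K)
  have hm0 : 0 < m 0 := by
    obtain ⟨K1, -, hK1⟩ := Finset.exists_mem_eq_inf' Finset.univ_nonempty (ρ 0)
    rw [show m 0 = ρ 0 K1 from hK1]
    exact h0 K1
  -- key right-derivative fact
  have key : ∀ t : ℝ, ∃ gt : ℝ, t ∈ Set.Ico (0:ℝ) T →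
      HasDerivWithinAt m gt (Set.Ioi t) t ∧ -C t * m t ≤ gt := by
    intro t
    by_cases ht : t ∈ Set.Ico (0:ℝ) T
    swap
    · exact ⟨0, fun h => absurd h ht⟩
    obtain ⟨K0, -, hK0⟩ := Finset.exists_mem_eq_inf' Finset.univ_nonempty (ρ t)
    set A : Finset ι := Finset.univ.filter (fun K => ρ t K = m t) with hAdef
    have hK0A : K0 ∈ A := by
      simp only [hAdef, Finset.mem_filter, Finset.mem_univ, true_and]
      exact hK0.symm
    have hAne : A.Nonempty := ⟨K0, hK0A⟩
    have hAval : ∀ K ∈ A, ρ t K = m t := fun K hK => (Finset.mem_filter.1 hK).2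
    refine ⟨A.inf' hAne (ρ' t), fun _ => ⟨?_, ?_⟩⟩
    · -- HasDerivWithinAt m (A.inf' hAne (ρ' t)) (Ioi t) t
      rw [hasDerivWithinAt_iff_tendsto_slope]
      have hIoiD : Set.Ioi t \ {t} = Set.Ioi t := by
        ext s; simp only [Set.mem_diff, Set.mem_singleton_iff, Set.mem_Ioi, and_iff_left_iff_imp]
        intro h; exact ne_of_gt h
      rw [hIoiD]
      have htIcc : t ∈ Set.Icc (0:ℝ) T := ⟨ht.1, ht.2.le⟩
      have hmem : Set.Icc (0:ℝ) T ∈ 𝓝[Set.Ioi t] t := by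
        have hT' : Set.Iio T ∈ 𝓝 t := Iio_mem_nhds ht.2
        filter_upwards [self_mem_nhdsWithin, mem_nhdsWithin_of_mem_nhds hT'] with s hs1 hs2
        exact ⟨le_of_lt (lt_of_le_of_lt ht.1 hs1), le_of_lt hs2⟩
      have hcomp : ∀ K : ι, Tendsto (fun s => ρ s K) (𝓝[Set.Ioi t] t) (𝓝 (ρ t K)) :=
        fun K => (hρcont K t htIcc).mono_of_mem_nhdsWithin hmem
      -- eventually m s = A.inf' (ρ s)
      have hev : ∀ᶠ s in 𝓝[Set.Ioi t] t, m s = A.inf' hAne (ρ s) := by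
        have hstrict : ∀ K ∈ Finset.univ.filter (fun K => K ∉ A), ρ t K0 < ρ t K := by
          intro K hK
          have hKA : K ∉ A := (Finset.mem_filter.1 hK).2
          have h1 : ρ t K ≠ m t := by
            intro h; exact hKA (by simp [hAdef, h])
          have h2 : m t ≤ ρ t K := hm_le t K
          rw [← hK0]
          exact lt_of_le_of_ne h2 (Ne.symm h1)
        have hev1 : ∀ᶠ s in 𝓝[Set.Ioi t] t,
            ∀ K ∈ Finset.univ.filter (fun K => K ∉ A), ρ s K0 < ρ s K := by
          rw [Filter.eventually_all_finset]
          intro K hK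
          exact (hcomp K0).eventually_lt (hcomp K) (hstrict K hK)
        filter_upwards [hev1] with s hs
        apply le_antisymm
        · exact Finset.le_inf' _ _ (fun K _ => Finset.inf'_le _ (Finset.mem_univ K))
        · obtain ⟨K1, -, hK1⟩ := Finset.exists_mem_eq_inf' Finset.univ_nonempty (ρ s)
          by_cases hK1A : K1 ∈ A
          · rw [show m s = ρ s K1 from hK1]
            exact Finset.inf'_le _ hK1A
          · exfalso
            have hlt := hs K1 (by simp [hK1A])
            have h2 : ρ s K1 ≤ ρ s K0 := by
              rw [← hK1]; exact hm_le s K0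
            linarith
      -- eventually slope m t s = inf' of slopes
      have hslope : ∀ᶠ s in 𝓝[Set.Ioi t] t,
          slope m t s = A.inf' hAne (fun K => slope (fun τ => ρ τ K) t s) := by
        filter_upwards [hev, self_mem_nhdsWithin] with s hs hs'
        have hst : (0:ℝ) < s - t := sub_pos.2 hs'
        have hmono : Monotone (fun x : ℝ => (x - m t) / (s - t)) := by
          intro a b hab
          simp only []
          apply div_le_div_of_nonneg_right (sub_le_sub_right hab (m t)) hst.le
        have e1 : (A.inf' hAne (ρ s) - m t) / (s - t)
            = A.inf' hAne ((fun x : ℝ => (x - m t) / (s - t)) ∘ (ρ s)) := by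
          exact Finset.apply_inf'_eq_inf'_comp hAne (fun x : ℝ => (x - m t) / (s - t))
            (fun x y => by
              exact hmono.map_min)
        rw [slope_def_field, hs, e1]
        apply Finset.inf'_congr hAne rfl
        intro K hK
        simp only [Function.comp_apply]
        rw [slope_def_field, hAval K hK]
      refine Filter.Tendsto.congr' (hslope.mono fun s h => h.symm) ?_
      apply Filter.Tendsto.finset_inf'_nhds_apply
      intro K _
      have hsub : Set.Icc (0:ℝ) T \ {t} ∈ 𝓝[Set.Ioi t] t := by
        filter_upwards [hmem, self_mem_nhdsWithin] with s h1 h2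
        exact ⟨h1, ne_of_gt h2⟩
      have h1 := (hasDerivWithinAt_iff_tendsto_slope.1 (hderiv K t htIcc))
      exact h1.mono_left (nhdsWithin_le_iff.2 hsub)
    · -- -C t * m t ≤ inf'
      apply Finset.le_inf'
      intro K hK
      have hKA := hAval K hK
      have h2 := hmin t ⟨ht.1, ht.2.le⟩ K (fun J => by rw [hKA]; exact hm_le t J)
      rw [hKA] at h2
      exact h2
  choose g hg using key
  -- Lemma (L)
  have L : ∀ b ∈ Set.Icc (0:ℝ) T, (∀ s ∈ Set.Icc (0:ℝ) b, 0 < m s) →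
      m 0 * Real.exp (-(∫ τ in (0:ℝ)..b, C τ)) ≤ m b := by
    intro b hb hpos
    have h0b : (0:ℝ) ≤ b := hb.1
    have hsub : Set.Icc (0:ℝ) b ⊆ Set.Icc (0:ℝ) T := Set.Icc_subset_Icc le_rfl hb.2
    have hcontf : ContinuousOn (fun t => -Real.log (m t)) (Set.Icc (0:ℝ) b) :=
      (((hmcont.mono hsub).log (fun t ht => (hpos t ht).ne'))).neg
    have hder : ∀ t ∈ Set.Ioo (0:ℝ) b, HasDerivWithinAt (fun t => -Real.log (m t))
        (-(g t / m t)) (Set.Ioi t) t := by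
      intro t ht
      have htIco : t ∈ Set.Ico (0:ℝ) T := ⟨ht.1.le, lt_of_lt_of_le ht.2 hb.2⟩
      exact (((hg t htIco).1.log (hpos t ⟨ht.1.le, ht.2.le⟩).ne')).neg
    have hbound : ∀ t ∈ Set.Ioo (0:ℝ) b, -(g t / m t) ≤ C t := by
      intro t ht
      have htIco : t ∈ Set.Ico (0:ℝ) T := ⟨ht.1.le, lt_of_lt_of_le ht.2 hb.2⟩
      have hmt := hpos t ⟨ht.1.le, ht.2.le⟩
      have h2 := (hg t htIco).2
      have he : -(g t / m t) = (-g t) / m t := by ring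
      rw [he, div_le_iff₀ hmt]
      nlinarith
    have hineq := intervalIntegral.sub_le_integral_of_hasDeriv_right_of_le h0b hcontf hder
      (hCint.mono_set hsub) hbound
    have hmb := hpos b ⟨h0b, le_rfl⟩
    have hm00 := hpos 0 ⟨le_rfl, h0b⟩
    have h3 : Real.log (m 0) + -(∫ τ in (0:ℝ)..b, C τ) ≤ Real.log (m b) := by linarith
    have h4 := Real.exp_le_exp.2 h3
    rw [Real.exp_add, Real.exp_log hm00, Real.exp_log hmb] at h4
    exact h4
  -- monotonicity of the integral in the endpoint
  have hCii : ∀ a b : ℝ, 0 ≤ a → a ≤ b → b ≤ T → IntervalIntegrable C volume a b := by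
    intro a b ha hab hbT
    apply IntegrableOn.intervalIntegrable
    rw [Set.uIcc_of_le hab]
    exact hCint.mono_set (Set.Icc_subset_Icc ha hbT)
  have hFmono : ∀ b ∈ Set.Icc (0:ℝ) T, (∫ τ in (0:ℝ)..b, C τ) ≤ ∫ τ in (0:ℝ)..T, C τ := by
    intro b hb
    rw [← intervalIntegral.integral_add_adjacent_intervals (hCii 0 b le_rfl hb.1 hb.2)
      (hCii b T hb.1 hb.2 le_rfl)]
    have h5 : 0 ≤ ∫ τ in b..T, C τ :=
      intervalIntegral.integral_nonneg hb.2 (fun u hu => hCpos u ⟨le_trans hb.1 hu.1, hu.2⟩)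
    linarith
  -- global positivity of m
  have hpos : ∀ t ∈ Set.Icc (0:ℝ) T, 0 < m t := by
    by_contra hcon
    push_neg at hcon
    obtain ⟨t0, ht0, ht0le⟩ := hcon
    set Z : Set ℝ := Set.Icc (0:ℝ) T ∩ m ⁻¹' Set.Iic 0 with hZdef
    have hZc : IsClosed Z := hmcont.preimage_isClosed_of_isClosed isClosed_Icc isClosed_Iic
    have hZne : Z.Nonempty := ⟨t0, ht0, ht0le⟩
    have hZbdd : BddBelow Z := ⟨0, fun z hz => hz.1.1⟩
    set t1 := sInf Z with ht1def
    have ht1Z : t1 ∈ Z := hZc.csInf_mem hZne hZbdd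
    have ht1Icc : t1 ∈ Set.Icc (0:ℝ) T := ht1Z.1
    have ht1pos : 0 < t1 := by
      rcases lt_or_eq_of_le ht1Icc.1 with h | h
      · exact h
      · exfalso; have := ht1Z.2; rw [← h] at this; exact absurd this (not_le.2 hm0)
    have hposlt : ∀ s, 0 ≤ s → s < t1 → 0 < m s := by
      intro s hs0 hst1
      by_contra hns
      push_neg at hns
      have hsZ : s ∈ Z := ⟨⟨hs0, le_trans hst1.le ht1Icc.2⟩, hns⟩
      exact absurd (csInf_le hZbdd hsZ) (not_le.2 hst1)
    set c := m 0 * Real.exp (-(∫ τ in (0:ℝ)..T, C τ)) with hcdef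
    have hc : 0 < c := mul_pos hm0 (Real.exp_pos _)
    have hlb : ∀ b, 0 ≤ b → b < t1 → c ≤ m b := by
      intro b hb0 hbt1
      have hbIcc : b ∈ Set.Icc (0:ℝ) T := ⟨hb0, le_trans hbt1.le ht1Icc.2⟩
      have h6 := L b hbIcc (fun s hs => hposlt s hs.1 (lt_of_le_of_lt hs.2 hbt1))
      have h7 : Real.exp (-(∫ τ in (0:ℝ)..T, C τ)) ≤ Real.exp (-(∫ τ in (0:ℝ)..b, C τ)) :=
        Real.exp_le_exp.2 (neg_le_neg (hFmono b hbIcc))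
      calc c ≤ m 0 * Real.exp (-(∫ τ in (0:ℝ)..b, C τ)) := by
              apply mul_le_mul_of_nonneg_left h7 hm0.le
        _ ≤ m b := h6
    -- limit from the left
    have hne : (𝓝[Set.Ioo (0:ℝ) t1] t1).NeBot := right_nhdsWithin_Ioo_neBot ht1pos
    have htend : Tendsto m (𝓝[Set.Ioo (0:ℝ) t1] t1) (𝓝 (m t1)) :=
      (hmcont t1 ht1Icc).mono_of_mem_nhdsWithin (by
        filter_upwards [self_mem_nhdsWithin] with s hs
        exact ⟨hs.1.le, le_trans hs.2.le ht1Icc.2⟩)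
    have hge : c ≤ m t1 := by
      apply ge_of_tendsto htend
      filter_upwards [self_mem_nhdsWithin] with s hs
      exact hlb s hs.1.le hs.2
    have := ht1Z.2
    simp only [Set.mem_preimage, Set.mem_Iic] at this
    linarith
  -- conclusion
  intro t ht K
  have h6 := L t ht (fun s hs => hpos s ⟨hs.1, le_trans hs.2 ht.2⟩)
  refine ⟨le_trans h6 (hm_le t K), mul_pos hm0 (Real.exp_pos _)⟩
end
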